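/- Let u : ℝⁿ → ℝⁿ be a C¹ vector field and a₀ a continuous matrix-valued symbol. Let x, ξ, b₁, …, b_{n−1} be differentiable curves such that (x, ξ, bᵢ) solves the bicharacteristic-amplitude system for each i = 1, …, n−1 (with the common pair (x, ξ)), with ξ(t) ≠ 0 for all t. Assume that the incompressibility constraint is preserved, i.e. bᵢ(t)·ξ(t) = 0 for all t and all i, and that the relation (a₀(x(t), ξ(t)) ξ(t))·ξ(t) = (Du(x(t)) ξ(t))·ξ(t) holds for all t. Then the function t ↦ det[b₁(t), …, b_{n−1}(t), ξ(t)] · ‖ξ(t)‖^{−2} · exp(−∫₀ᵗ tr a₀(x(s), ξ(s)) ds) is constant, where det[v₁, …, vₙ] denotes the determinant of the n×n complex matrix with columns v₁, …, vₙ (ξ(t) viewed as a vector in ℂⁿ). -/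

import Mathlib

open Matrix

/-- The Jacobian matrix `Du(x)` of a vector field `u : ℝⁿ → ℝⁿ`, with entries
`(Du)_{ij} = ∂u_i/∂x_j`. -/
noncomputable def jacobian {n : ℕ} (u : (Fin n → ℝ) → (Fin n → ℝ)) (x : Fin n → ℝ) :
    Matrix (Fin n) (Fin n) ℝ :=
  Matrix.of fun i j => fderiv ℝ u x (Pi.single j 1) i

/-- determinant as a continuous multilinear map in the rows. -/
noncomputable def detCML (n : ℕ) : ContinuousMultilinearMap ℂ (fun _ : Fin n => (Fin n → ℂ)) ℂ where
  toMultilinearMap := (Matrix.detRowAlternating : (Fin n → ℂ) [⋀^Fin n]→ₗ[ℂ] ℂ).toMultilinearMap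
  cont := Continuous.matrix_det continuous_id

lemma det_updateRow_eq_sum {n : ℕ} (M : Matrix (Fin n) (Fin n) ℂ) (j : Fin n) (w : Fin n → ℂ) :
    (M.updateRow j w).det = ∑ p, w p * M.adjugate p j := by
  have h1 : (M.updateRow j w).det = Matrix.cramer Mᵀ w j := by
    rw [Matrix.cramer_apply, Matrix.updateCol_transpose, Matrix.det_transpose]
  have hw : w = ∑ p, w p • (Pi.single p (1:ℂ) : Fin n → ℂ) := by
    ext i
    simp [Pi.single_apply]
  rw [h1]
  conv_lhs => rw [hw]
  rw [map_sum]
  simp only [LinearMap.map_smul, Finset.sum_apply, Pi.smul_apply, smul_eq_mul]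
  refine Finset.sum_congr rfl fun p _ => ?_
  rw [Matrix.adjugate_def]
  rfl

lemma sum_det_updateRow_mulVec {n : ℕ} (M A : Matrix (Fin n) (Fin n) ℂ) :
    ∑ j, (M.updateRow j (A.mulVec (M j))).det = A.trace * M.det := by
  simp_rw [det_updateRow_eq_sum, Matrix.mulVec, dotProduct]
  have key : ∀ p k, (∑ j, M.adjugate p j * M j k) = if p = k then M.det else 0 := by
    intro p k
    have := congrFun (congrFun (Matrix.adjugate_mul M) p) k
    simpa [Matrix.mul_apply, Matrix.one_apply] using this
  calc ∑ j, ∑ p, (∑ k, A p k * M j k) * M.adjugate p j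
      = ∑ p, ∑ k, A p k * (∑ j, M.adjugate p j * M j k) := by
        rw [Finset.sum_comm]
        refine Finset.sum_congr rfl fun p _ => ?_
        simp_rw [Finset.mul_sum, Finset.sum_mul]
        rw [Finset.sum_comm]
        exact Finset.sum_congr rfl fun k _ => Finset.sum_congr rfl fun j _ => by ring
    _ = ∑ p, A p p * M.det := by
        refine Finset.sum_congr rfl fun p _ => ?_
        simp [key]
    _ = A.trace * M.det := by rw [Matrix.trace, Finset.sum_mul]; rfl

lemma det_eq_zero_of_rows_orth {n : ℕ} (ξ : Fin n → ℝ) (hξ : ξ ≠ 0)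
    (M : Matrix (Fin n) (Fin n) ℂ) (h : ∀ j, ∑ i, M j i * (ξ i : ℂ) = 0) :
    M.det = 0 := by
  classical
  obtain ⟨i₀, hi₀⟩ : ∃ i, ξ i ≠ 0 := by
    by_contra hc
    push_neg at hc
    exact hξ (funext hc)
  by_contra hdet
  have h1 : M⁻¹ * M = 1 := Matrix.nonsing_inv_mul M (isUnit_iff_ne_zero.2 hdet)
  have hall : ∀ w : Fin n → ℂ, ∑ i, w i * (ξ i : ℂ) = 0 := by
    intro w
    have hw : w = Matrix.vecMul (Matrix.vecMul w M⁻¹) M := by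
      rw [Matrix.vecMul_vecMul, h1, Matrix.vecMul_one]
    rw [hw]
    set v := Matrix.vecMul w M⁻¹ with hv
    have : ∑ i, (Matrix.vecMul v M) i * (ξ i : ℂ)
        = ∑ j, v j * (∑ i, M j i * (ξ i : ℂ)) := by
      simp_rw [Matrix.vecMul, dotProduct, Finset.sum_mul, Finset.mul_sum]
      rw [Finset.sum_comm]
      exact Finset.sum_congr rfl fun j _ => Finset.sum_congr rfl fun i _ => by ring
    rw [this]
    simp [h]
  have := hall (Pi.single i₀ 1)
  simp [Pi.single_apply] at this
  exact hi₀ (by exact_mod_cast this)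

lemma hasDerivAt_det_rows {n : ℕ} (c : ℝ → (Fin n → Fin n → ℂ)) (c' : Fin n → Fin n → ℂ) (t : ℝ)
    (h : ∀ j, HasDerivAt (fun s => c s j) (c' j) t) :
    HasDerivAt (fun s => (Matrix.of (c s)).det)
      (∑ j, ((Matrix.of (c t)).updateRow j (c' j)).det) t := by
  classical
  have hf := HasFDerivAt.multilinear_comp ((detCML n).restrictScalars ℝ)
      (g := fun j s => c s j)
      (g' := fun j => ContinuousLinearMap.smulRight (1 : ℝ →L[ℝ] ℝ) (c' j))
      (fun j => (h j).hasFDerivAt)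
  have h2 := hf.hasDerivAt
  have hval : ((∑ i : Fin n, (((detCML n).restrictScalars ℝ).toContinuousLinearMap
        (fun j => c t j) i) ∘L (ContinuousLinearMap.smulRight (1 : ℝ →L[ℝ] ℝ) (c' i)))) 1
      = ∑ j, ((Matrix.of (c t)).updateRow j (c' j)).det := by
    rw [ContinuousLinearMap.sum_apply]
    refine Finset.sum_congr rfl fun j _ => ?_
    simp only [ContinuousLinearMap.comp_apply, ContinuousLinearMap.smulRight_apply,
      ContinuousLinearMap.one_apply, one_smul,
      ContinuousMultilinearMap.toContinuousLinearMap_apply]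
    rfl
  rw [hval] at h2
  exact h2

/-- The rows: first `n-1` rows are the amplitudes `bᵢ`, last row is `ξ`. -/
noncomputable def colfun {n : ℕ} (b : Fin (n - 1) → ℝ → Fin n → ℂ) (ξ : ℝ → Fin n → ℝ)
    (t : ℝ) : Fin n → Fin n → ℂ :=
  fun j => if h : (j : ℕ) < n - 1 then b ⟨j, h⟩ t else fun i => (ξ t i : ℂ)

theorem stmt_3 {n : ℕ}
    (u : (Fin n → ℝ) → (Fin n → ℝ)) (hu : ContDiff ℝ 1 u)
    (a₀ : (Fin n → ℝ) → (Fin n → ℝ) → Matrix (Fin n) (Fin n) ℂ)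
    (ha₀ : ContinuousOn (fun p : (Fin n → ℝ) × (Fin n → ℝ) => a₀ p.1 p.2)
      {p | p.2 ≠ 0})
    (x : ℝ → Fin n → ℝ) (ξ : ℝ → Fin n → ℝ) (b : Fin (n - 1) → ℝ → Fin n → ℂ)
    (hξne : ∀ t, ξ t ≠ 0)
    (hx : ∀ t, HasDerivAt x (u (x t)) t)
    (hξ : ∀ t, HasDerivAt ξ (-((jacobian u (x t)).transpose.mulVec (ξ t))) t)
    (hb : ∀ i t, HasDerivAt (b i) ((a₀ (x t) (ξ t)).mulVec (b i t)) t)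
    (hconstraint : ∀ i t, (∑ j, b i t j * (ξ t j : ℂ)) = 0)
    (hrel : ∀ t,
      (∑ i, ((a₀ (x t) (ξ t)).mulVec fun j => (ξ t j : ℂ)) i * (ξ t i : ℂ))
        = ∑ i, (((jacobian u (x t)).mulVec (ξ t)) i : ℂ) * (ξ t i : ℂ)) :
    ∀ t₁ t₂ : ℝ,
      (Matrix.det (Matrix.of fun i (j : Fin n) =>
            if h : (j : ℕ) < n - 1 then b ⟨j, h⟩ t₁ i else (ξ t₁ i : ℂ)))
          * ((∑ i, ξ t₁ i ^ 2 : ℝ) : ℂ)⁻¹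
          * Complex.exp (-(∫ s in (0:ℝ)..t₁, Matrix.trace (a₀ (x s) (ξ s))))
      = (Matrix.det (Matrix.of fun i (j : Fin n) =>
            if h : (j : ℕ) < n - 1 then b ⟨j, h⟩ t₂ i else (ξ t₂ i : ℂ)))
          * ((∑ i, ξ t₂ i ^ 2 : ℝ) : ℂ)⁻¹
          * Complex.exp (-(∫ s in (0:ℝ)..t₂, Matrix.trace (a₀ (x s) (ξ s)))) := by
  classical
  have hn : 0 < n := by
    rcases Nat.eq_zero_or_pos n with h0 | h
    · subst h0
      exact absurd (Subsingleton.elim (ξ 0) 0) (hξne 0)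
    · exact h
  set last : Fin n := ⟨n - 1, by omega⟩ with hlastdef
  -- the conserved quantity
  set F : ℝ → ℂ := fun t => (Matrix.of (colfun b ξ t)).det * ((∑ i, ξ t i ^ 2 : ℝ) : ℂ)⁻¹
      * Complex.exp (-(∫ s in (0:ℝ)..t, Matrix.trace (a₀ (x s) (ξ s)))) with hFdef
  -- positivity of N
  have hNpos : ∀ t, 0 < (∑ i, ξ t i ^ 2 : ℝ) := by
    intro t
    obtain ⟨i₀, hi₀⟩ : ∃ i, ξ t i ≠ 0 := by
      by_contra hc
      push_neg at hc
      exact hξne t (funext hc)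
    refine Finset.sum_pos' (fun i _ => sq_nonneg _) ⟨i₀, Finset.mem_univ i₀, ?_⟩
    positivity
  have hNne : ∀ t, ((∑ i, ξ t i ^ 2 : ℝ) : ℂ) ≠ 0 := by
    intro t
    exact_mod_cast ne_of_gt (hNpos t)
  -- derivative of N
  have hξcomp : ∀ t i, HasDerivAt (fun s => ξ s i)
      (-((jacobian u (x t)).transpose.mulVec (ξ t)) i) t :=
    fun t i => (hasDerivAt_pi.1 (hξ t)) i
  have hNder : ∀ t, HasDerivAt (fun s => (∑ i, ξ s i ^ 2 : ℝ))
      (-2 * ∑ i, ((jacobian u (x t)).mulVec (ξ t)) i * ξ t i) t := by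
    intro t
    have h1 : HasDerivAt (fun s => (∑ i, ξ s i ^ 2 : ℝ))
        (∑ i, 2 * ξ t i ^ 1 * (-((jacobian u (x t)).transpose.mulVec (ξ t)) i)) t := by
      refine HasDerivAt.fun_sum fun i _ => ?_
      simpa using (hξcomp t i).fun_pow 2
    convert h1 using 1
    simp only [Matrix.mulVec, dotProduct, Matrix.transpose_apply, Pi.neg_apply,
      pow_one]
    rw [Finset.mul_sum]
    calc ∑ i, -2 * ((∑ k, jacobian u (x t) i k * ξ t k) * ξ t i)
        = ∑ i, ∑ k, (-2 : ℝ) * (jacobian u (x t) i k * ξ t k * ξ t i) := by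
          refine Finset.sum_congr rfl fun i _ => ?_
          rw [Finset.sum_mul, Finset.mul_sum]
      _ = ∑ k, ∑ i, (-2 : ℝ) * (jacobian u (x t) i k * ξ t k * ξ t i) :=
          Finset.sum_comm

      _ = ∑ k, 2 * ξ t k * -∑ i, jacobian u (x t) i k * ξ t i := by
          refine Finset.sum_congr rfl fun k _ => ?_
          rw [mul_neg, Finset.mul_sum, ← Finset.sum_neg_distrib]
          exact Finset.sum_congr rfl fun i _ => by ring
  -- trace continuity
  have hxc : Continuous x := Differentiable.continuous fun t => (hx t).differentiableAt
  have hξcont : Continuous ξ := Differentiable.continuous fun t => (hξ t).differentiableAt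
  have hmapc : Continuous fun s => a₀ (x s) (ξ s) := by
    have hpair : Continuous fun s => ((x s, ξ s) : (Fin n → ℝ) × (Fin n → ℝ)) :=
      hxc.prodMk hξcont
    exact ha₀.comp_continuous hpair (fun s => hξne s)
  have hgc : Continuous fun s => Matrix.trace (a₀ (x s) (ξ s)) := hmapc.matrix_trace
  have hI : ∀ t, HasDerivAt (fun τ => ∫ s in (0:ℝ)..τ, Matrix.trace (a₀ (x s) (ξ s)))
      (Matrix.trace (a₀ (x t) (ξ t))) t := by
    intro t
    exact intervalIntegral.integral_hasDerivAt_right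
      (hgc.intervalIntegrable 0 t)
      (hgc.stronglyMeasurableAtFilter _ _)
      hgc.continuousAt
  have hlv : ((last : Fin n) : ℕ) = n - 1 := rfl
  have hMlast : ∀ t, colfun b ξ t last = fun i => (ξ t i : ℂ) := by
    intro t
    simp only [colfun, hlv]
    rw [dif_neg (lt_irrefl _)]
  have hMrow : ∀ t (j : Fin n) (h : (j : ℕ) < n - 1), colfun b ξ t j = b ⟨j, h⟩ t := by
    intro t j h
    simp only [colfun]
    rw [dif_pos h]
  have hjne : ∀ j : Fin n, j ≠ last → (j : ℕ) < n - 1 := by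
    intro j hj
    rcases lt_or_ge (j : ℕ) (n - 1) with h | h
    · exact h
    · exact absurd (Fin.val_injective (by omega : (j : ℕ) = ((last : Fin n) : ℕ))) hj
  have hrowconstraint : ∀ t (j : Fin n), j ≠ last →
      ∑ i, colfun b ξ t j i * (ξ t i : ℂ) = 0 := by
    intro t j hj
    rw [hMrow t j (hjne j hj)]
    exact hconstraint ⟨j, hjne j hj⟩ t
  -- real identity : (Duᵀ ξ)·ξ = (Du ξ)·ξ
  have htransp : ∀ t, (∑ i, ((jacobian u (x t)).transpose.mulVec (ξ t)) i * ξ t i)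
      = ∑ i, ((jacobian u (x t)).mulVec (ξ t)) i * ξ t i := by
    intro t
    simp only [Matrix.mulVec, dotProduct, Matrix.transpose_apply]
    calc ∑ i, (∑ k, jacobian u (x t) k i * ξ t k) * ξ t i
        = ∑ i, ∑ k, jacobian u (x t) k i * ξ t k * ξ t i := by
          refine Finset.sum_congr rfl fun i _ => Finset.sum_mul _ _ _
      _ = ∑ k, ∑ i, jacobian u (x t) k i * ξ t k * ξ t i := Finset.sum_comm
      _ = ∑ k, (∑ i, jacobian u (x t) k i * ξ t i) * ξ t k := by
          refine Finset.sum_congr rfl fun k _ => ?_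
          rw [Finset.sum_mul]
          exact Finset.sum_congr rfl fun i _ => by ring
  -- the derivative of the determinant
  have hDder : ∀ t, HasDerivAt (fun s => (Matrix.of (colfun b ξ s)).det)
      (Matrix.trace (a₀ (x t) (ξ t)) * (Matrix.of (colfun b ξ t)).det
        + (((-2 * ∑ i, ((jacobian u (x t)).mulVec (ξ t)) i * ξ t i) / (∑ i, ξ t i ^ 2) : ℝ) : ℂ)
          * (Matrix.of (colfun b ξ t)).det) t := by
    intro t
    set A : Matrix (Fin n) (Fin n) ℂ := a₀ (x t) (ξ t) with hA
    set ξc : Fin n → ℂ := fun i => (ξ t i : ℂ) with hξc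
    set ξ'c : Fin n → ℂ := fun i => ((-((jacobian u (x t)).transpose.mulVec (ξ t)) i : ℝ) : ℂ)
      with hξ'c
    set M : Matrix (Fin n) (Fin n) ℂ := Matrix.of (colfun b ξ t) with hM
    set v : Fin n → Fin n → ℂ := fun j =>
      if h : (j : ℕ) < n - 1 then A.mulVec (b ⟨j, h⟩ t) else ξ'c with hvdef
    have hrows : ∀ j, HasDerivAt (fun s => colfun b ξ s j) (v j) t := by
      intro j
      by_cases h : (j : ℕ) < n - 1
      · have he : (fun s => colfun b ξ s j) = b ⟨j, h⟩ := funext fun s => hMrow s j h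
        rw [he, hvdef]
        simp only [dif_pos h]
        exact hb ⟨j, h⟩ t
      · have hj : j = last := by
          by_contra hc
          exact h (hjne j hc)
        have he : (fun s => colfun b ξ s j) = fun s i => ((ξ s i : ℝ) : ℂ) := by
          funext s
          rw [hj, hMlast s]
        rw [he, hvdef]
        simp only [dif_neg h]
        exact hasDerivAt_pi.2 fun i => (hξcomp t i).ofReal_comp
    have hd := hasDerivAt_det_rows (fun s => colfun b ξ s) v t hrows
    convert hd using 1
    set wv : Fin n → ℂ := ξ'c - A.mulVec ξc with hwv
    set ρ : ℂ := (((-2 * ∑ i, ((jacobian u (x t)).mulVec (ξ t)) i * ξ t i) / (∑ i, ξ t i ^ 2) : ℝ) : ℂ)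
      with hρ
    have hMrowe : ∀ j, M j = colfun b ξ t j := fun j => rfl
    have hsplit : ∀ j, v j = A.mulVec (M j) + (if j = last then wv else 0) := by
      intro j
      by_cases h : (j : ℕ) < n - 1
      · have hjlast : j ≠ last := by
          intro he
          rw [he, hlv] at h
          omega
        rw [hvdef]
        simp only [dif_pos h, if_neg hjlast, add_zero, hMrowe, hMrow t j h]
      · have hj : j = last := by
          by_contra hc
          exact h (hjne j hc)
        subst hj
        rw [hvdef]
        simp only [dif_neg h, if_pos rfl, hwv, hMrowe, hMlast t, ← hξc, if_true]
        rw [add_comm, sub_add_cancel]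
    -- the value of wv · ξ
    have hwvxi : ∑ i, wv i * (ξ t i : ℂ)
        = ((-2 * ∑ i, ((jacobian u (x t)).mulVec (ξ t)) i * ξ t i : ℝ) : ℂ) := by
      have e1 : ∑ i, wv i * (ξ t i : ℂ)
          = (∑ i, ξ'c i * (ξ t i : ℂ)) - ∑ i, (A.mulVec ξc) i * (ξ t i : ℂ) := by
        rw [← Finset.sum_sub_distrib]
        refine Finset.sum_congr rfl fun i _ => ?_
        rw [hwv]
        simp [sub_mul]
      have e2 : ∑ i, (A.mulVec ξc) i * (ξ t i : ℂ)
          = ((∑ i, ((jacobian u (x t)).mulVec (ξ t)) i * ξ t i : ℝ) : ℂ) := by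
        rw [hA, hξc]
        rw [show (fun i => (ξ t i : ℂ)) = fun j => ((ξ t j : ℝ) : ℂ) from rfl]
        rw [hrel t]
        push_cast
        rfl
      have e3 : ∑ i, ξ'c i * (ξ t i : ℂ)
          = ((-(∑ i, ((jacobian u (x t)).mulVec (ξ t)) i * ξ t i) : ℝ) : ℂ) := by
        rw [hξ'c, ← htransp t]
        push_cast
        rw [← Finset.sum_neg_distrib]
        exact Finset.sum_congr rfl fun i _ => by ring
      rw [e1, e2, e3]
      push_cast
      ring
    calc Matrix.trace A * M.det + ρ * M.det
        = A.trace * M.det + (ρ * (M.updateRow last ξc).det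
            + (M.updateRow last (wv - ρ • ξc)).det) := by
          have hzero : (M.updateRow last (wv - ρ • ξc)).det = 0 := by
            refine det_eq_zero_of_rows_orth (ξ t) (hξne t) _ fun j => ?_
            by_cases hj : j = last
            · subst hj
              simp only [Matrix.updateRow_self]
              have : ∑ i, (wv - ρ • ξc) i * (ξ t i : ℂ)
                  = (∑ i, wv i * (ξ t i : ℂ)) - ρ * ∑ i, ξc i * (ξ t i : ℂ) := by
                rw [Finset.mul_sum, ← Finset.sum_sub_distrib]
                refine Finset.sum_congr rfl fun i _ => ?_
                simp [sub_mul, mul_assoc]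
              rw [this, hwvxi]
              have hsq : ∑ i, ξc i * (ξ t i : ℂ) = ((∑ i, ξ t i ^ 2 : ℝ) : ℂ) := by
                rw [hξc]
                push_cast
                exact Finset.sum_congr rfl fun i _ => by ring
              rw [hsq, hρ]
              rw [Complex.ofReal_div]
              rw [div_mul_cancel₀ _ (hNne t), sub_self]
            · rw [Matrix.updateRow_ne hj]
              exact hrowconstraint t j hj
          rw [hzero, add_zero]
          have hself : M.updateRow last ξc = M := by
            have : ξc = M last := by rw [hMrowe, hMlast t, hξc]
            rw [this, Matrix.updateRow_eq_self]
          rw [hself]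
      _ = ∑ j, (M.updateRow j (v j)).det := by
          have expand : ∀ j, (M.updateRow j (v j)).det
              = (M.updateRow j (A.mulVec (M j))).det
                + (M.updateRow j (if j = last then wv else 0)).det := by
            intro j
            rw [hsplit j, Matrix.det_updateRow_add]
          rw [Finset.sum_congr rfl fun j _ => expand j, Finset.sum_add_distrib,
            sum_det_updateRow_mulVec]
          congr 1
          rw [Finset.sum_eq_single last]
          · rw [if_pos rfl]
            have hdec : wv = ρ • ξc + (wv - ρ • ξc) := by abel
            rw [hdec, Matrix.det_updateRow_add, Matrix.det_updateRow_smul]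
            ring_nf
          · intro j _ hj
            rw [if_neg hj]
            refine Matrix.det_eq_zero_of_row_eq_zero j fun i => ?_
            simp
          · intro h
            exact absurd (Finset.mem_univ last) h
  -- assemble : F has derivative zero everywhere
  have hF0 : ∀ t, HasDerivAt F 0 t := by
    intro t
    have hNc : HasDerivAt (fun s => ((∑ i, ξ s i ^ 2 : ℝ) : ℂ))
        ((-2 * ∑ i, ((jacobian u (x t)).mulVec (ξ t)) i * ξ t i : ℝ) : ℂ) t :=
      (hNder t).ofReal_comp
    have hexp := ((hI t).neg).cexp
    have hdiv := HasDerivAt.div (hDder t) hNc (hNne t)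
    have hmul2 := hdiv.mul hexp
    have hFeq : F = fun τ => ((Matrix.of (colfun b ξ τ)).det / ((∑ i, ξ τ i ^ 2 : ℝ) : ℂ))
        * Complex.exp (-(∫ s in (0:ℝ)..τ, Matrix.trace (a₀ (x s) (ξ s)))) := by
      funext τ
      rw [hFdef, div_eq_mul_inv]
    rw [hFeq]
    convert hmul2 using 1
    case e'_4 => rfl
    case e'_8 => rfl
    simp only [Pi.div_apply, Pi.neg_apply]
    set Dt : ℂ := (Matrix.of (colfun b ξ t)).det
    set Tr : ℂ := Matrix.trace (a₀ (x t) (ξ t))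
    set Nr : ℝ := (∑ i, ξ t i ^ 2 : ℝ)
    set Rr : ℝ := (-2 * ∑ i, ((jacobian u (x t)).mulVec (ξ t)) i * ξ t i : ℝ)
    set Ex : ℂ := Complex.exp (-(∫ s in (0:ℝ)..t, Matrix.trace (a₀ (x s) (ξ s))))
    have hNrne : ((Nr : ℝ) : ℂ) ≠ 0 := hNne t
    rw [Complex.ofReal_div]
    field_simp
    ring
  have hconst : ∀ t₁ t₂ : ℝ, F t₁ = F t₂ := by
    intro t₁ t₂
    exact is_const_of_deriv_eq_zero (fun t => (hF0 t).differentiableAt)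
      (fun t => (hF0 t).deriv) t₁ t₂
  intro t₁ t₂
  have hdeteq : ∀ t, (Matrix.det (Matrix.of fun i (j : Fin n) =>
      if h : (j : ℕ) < n - 1 then b ⟨j, h⟩ t i else (ξ t i : ℂ)))
      = (Matrix.of (colfun b ξ t)).det := by
    intro t
    rw [← Matrix.det_transpose (Matrix.of (colfun b ξ t))]
    congr 1
    ext i j
    simp only [Matrix.transpose_apply, Matrix.of_apply, colfun]
    by_cases h : (j : ℕ) < n - 1
    · rw [dif_pos h, dif_pos h]
    · rw [dif_neg h, dif_neg h]
  rw [hdeteq t₁, hdeteq t₂]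
  exact hconst t₁ t₂
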